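/- arXiv:2504.18339 — 6 statements merged into one kernel-verified Lean document; each statement's English description precedes it below -/
import Mathlib

section
/- Let t₁, t₂, t₃ ∈ ℝ² be non-collinear tower positions with calibrated source intensities s_c⁽¹⁾, s_c⁽²⁾, s_c⁽³⁾ > 0, and define the sensor map h : ℝ² → ℝ³ by h(x)ᵢ = s_c⁽ⁱ⁾/(1 + ‖x − tᵢ‖²) for i = 1,2,3. Then h is injective. -/
/-- With non-collinear tower positions `t i` and calibrated source
intensities `s_c i > 0`, the sensor map `h(x) i = s_c i / (1 + ‖x - t i‖²)` is injective. -/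
theorem sensor_map_injective
    (t : Fin 3 → EuclideanSpace ℝ (Fin 2)) (ht : AffineIndependent ℝ t)
    (s_c : Fin 3 → ℝ) (hs : ∀ i, 0 < s_c i) :
    Function.Injective
      (fun x : EuclideanSpace ℝ (Fin 2) => fun i : Fin 3 => s_c i / (1 + ‖x - t i‖ ^ 2)) := by
  intro x y hxy
  have hd : ∀ i, ‖x - t i‖ ^ 2 = ‖y - t i‖ ^ 2 := by
    intro i
    have h1 : s_c i / (1 + ‖x - t i‖ ^ 2) = s_c i / (1 + ‖y - t i‖ ^ 2) :=
      congrFun hxy i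
    rw [div_eq_div_iff (by positivity) (by positivity)] at h1
    have := mul_left_cancel₀ (ne_of_gt (hs i)) (by linarith [h1] : s_c i * (1 + ‖y - t i‖ ^ 2) = s_c i * (1 + ‖x - t i‖ ^ 2))
    linarith
  have hinner : ∀ j : Fin 3, inner ℝ (x - y) (t j - t 0) = (0:ℝ) := by
    intro j
    have h0 := hd 0
    have hj := hd j
    have e1 : ‖x - t j‖ ^ 2 = ‖x‖^2 - 2 * inner ℝ x (t j) + ‖t j‖^2 := by
      rw [norm_sub_sq_real]
    have e2 : ‖y - t j‖ ^ 2 = ‖y‖^2 - 2 * inner ℝ y (t j) + ‖t j‖^2 := by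
      rw [norm_sub_sq_real]
    have e3 : ‖x - t 0‖ ^ 2 = ‖x‖^2 - 2 * inner ℝ x (t 0) + ‖t 0‖^2 := by
      rw [norm_sub_sq_real]
    have e4 : ‖y - t 0‖ ^ 2 = ‖y‖^2 - 2 * inner ℝ y (t 0) + ‖t 0‖^2 := by
      rw [norm_sub_sq_real]
    have key : (inner ℝ x (t j) : ℝ) - inner ℝ x (t 0) = (inner ℝ y (t j) : ℝ) - inner ℝ y (t 0) := by
      nlinarith [h0, hj]
    have expand : inner ℝ (x - y) (t j - t 0) =
        (inner ℝ x (t j) - inner ℝ x (t 0)) - ((inner ℝ y (t j) : ℝ) - inner ℝ y (t 0)) := by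
      simp [inner_sub_left, inner_sub_right]; ring
    rw [expand, key]; ring
  have hb : LinearIndependent ℝ ![t 1 - t 0, t 2 - t 0] := by
    have h := (affineIndependent_iff_linearIndependent_vsub ℝ t 0).mp ht
    have h2 := h.comp (![⟨1, by decide⟩, ⟨2, by decide⟩] : Fin 2 → {i : Fin 3 // i ≠ 0})
      (by decide)
    convert h2 using 1
    funext j
    fin_cases j <;> rfl
    rfl
  have hspan : Submodule.span ℝ (Set.range ![t 1 - t 0, t 2 - t 0]) = ⊤ := by
    apply hb.span_eq_top_of_card_eq_finrank
    simp
  have hv : x - y ∈ Submodule.span ℝ ({t 1 - t 0, t 2 - t 0} : Set (EuclideanSpace ℝ (Fin 2))) := by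
    rw [show ({t 1 - t 0, t 2 - t 0} : Set (EuclideanSpace ℝ (Fin 2))) = Set.range ![t 1 - t 0, t 2 - t 0] by
      simp [Matrix.range_cons, Matrix.range_empty, Set.pair_comm]]
    rw [hspan]; trivial
  rw [Submodule.mem_span_pair] at hv
  obtain ⟨a, b, hab⟩ := hv
  have hz : inner ℝ (x - y) (x - y) = (0:ℝ) := by
    have : (inner ℝ (x - y) (x - y) : ℝ) = inner ℝ (x - y) (a • (t 1 - t 0) + b • (t 2 - t 0)) := by
      rw [hab]
    rw [inner_add_right, real_inner_smul_right, real_inner_smul_right,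
      hinner 1, hinner 2] at this
    simpa using this
  exact sub_eq_zero.mp (inner_self_eq_zero.mp hz)
end

section
/- Let t₁, t₂, t₃ ∈ ℝ² be tower positions with calibrated source intensities s_c⁽ⁱ⁾ > 0. Fix an actual receiver position ω ∈ ℝ² and any target estimate ι ∈ ℝ², and set the spoofed source intensities s⁽ⁱ⁾ = s_c⁽ⁱ⁾·(1 + ‖tᵢ − ω‖²)/(1 + ‖tᵢ − ι‖²). Then the intensity actually measured at ω under the spoofed sources, namely s⁽ⁱ⁾/(1 + ‖tᵢ − ω‖²), equals s_c⁽ⁱ⁾/(1 + ‖tᵢ − ι‖²) for each i; in particular ι lies in the preimage of the resulting observation under the calibrated sensor map h(x)ᵢ = s_c⁽ⁱ⁾/(1 + ‖x − tᵢ‖²), and if moreover t₁, t₂, t₃ are non-collinear this preimage equals exactly {ι}. -/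
/-- Spoofing the tower intensities to
`s i = s_c i * (1 + ‖t i - ω‖²) / (1 + ‖t i - ι‖²)` makes the intensity actually measured
at the true position `ω` equal `s_c i / (1 + ‖t i - ι‖²)` for each `i`; in particular the
target estimate `ι` lies in the preimage of the resulting observation under the calibrated
sensor map, and if the towers are non-collinear the preimage is exactly `{ι}`. -/
theorem spoofed_intensities_produce_target_estimate
    (t : Fin 3 → EuclideanSpace ℝ (Fin 2))
    (s_c : Fin 3 → ℝ) (hs : ∀ i, 0 < s_c i)
    (ω ι : EuclideanSpace ℝ (Fin 2))
    (s : Fin 3 → ℝ)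
    (hspoof : ∀ i, s i = s_c i * (1 + ‖t i - ω‖ ^ 2) / (1 + ‖t i - ι‖ ^ 2)) :
    (∀ i : Fin 3, s i / (1 + ‖t i - ω‖ ^ 2) = s_c i / (1 + ‖t i - ι‖ ^ 2)) ∧
    ι ∈ {x : EuclideanSpace ℝ (Fin 2) |
          ∀ i : Fin 3, s_c i / (1 + ‖x - t i‖ ^ 2) = s i / (1 + ‖t i - ω‖ ^ 2)} ∧
    (AffineIndependent ℝ t →
      {x : EuclideanSpace ℝ (Fin 2) |
          ∀ i : Fin 3, s_c i / (1 + ‖x - t i‖ ^ 2) = s i / (1 + ‖t i - ω‖ ^ 2)} = {ι}) := by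
  have hposω : ∀ i, (0:ℝ) < 1 + ‖t i - ω‖ ^ 2 := fun i => by positivity
  have hposι : ∀ i, (0:ℝ) < 1 + ‖t i - ι‖ ^ 2 := fun i => by positivity
  have key : ∀ i : Fin 3, s i / (1 + ‖t i - ω‖ ^ 2) = s_c i / (1 + ‖t i - ι‖ ^ 2) := by
    intro i
    rw [hspoof i]
    field_simp
  have hι : ∀ i : Fin 3, s_c i / (1 + ‖ι - t i‖ ^ 2) = s i / (1 + ‖t i - ω‖ ^ 2) := by
    intro i
    rw [key i, norm_sub_rev]
  refine ⟨key, hι, fun hind => ?_⟩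
  ext x
  simp only [Set.mem_setOf_eq, Set.mem_singleton_iff]
  constructor
  · intro hx
    -- from intensity equalities deduce equal distances
    have hdist : ∀ i, dist x (t i) = dist ι (t i) := by
      intro i
      have h1 : s_c i / (1 + ‖x - t i‖ ^ 2) = s_c i / (1 + ‖ι - t i‖ ^ 2) := by
        rw [hx i, hι i]
      have hpx : (0:ℝ) < 1 + ‖x - t i‖ ^ 2 := by positivity
      have hpι : (0:ℝ) < 1 + ‖ι - t i‖ ^ 2 := by positivity
      field_simp at h1
      rcases (mul_eq_mul_left_iff.mp h1) with h | h
      · rw [dist_eq_norm, dist_eq_norm]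
        exact (sq_eq_sq₀ (norm_nonneg _) (norm_nonneg _)).1 (by linarith)
      · exact absurd h (ne_of_gt (hs i))
    -- all towers lie on perpBisector x ι
    have hmem : ∀ i, t i ∈ AffineSubspace.perpBisector x ι := by
      intro i
      rw [AffineSubspace.mem_perpBisector_iff_dist_eq']
      exact hdist i
    have hspan : affineSpan ℝ (Set.range t) = ⊤ := by
      rw [hind.affineSpan_eq_top_iff_card_eq_finrank_add_one]
      simp [finrank_euclideanSpace]
    have htop : AffineSubspace.perpBisector x ι = ⊤ := by
      rw [← top_le_iff, ← hspan]
      rw [affineSpan_le]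
      rintro _ ⟨i, rfl⟩
      exact hmem i
    exact (AffineSubspace.perpBisector_eq_top).mp htop
  · rintro rfl
    exact hι
end

section
/- Let t₁, t₂, t₃ ∈ ℝ² be non-collinear tower positions with calibrated source intensities s_c⁽ⁱ⁾ > 0, and fix an actual receiver position ω ∈ ℝ². Then the spoofing map ι ↦ (s⁽¹⁾, s⁽²⁾, s⁽³⁾) defined by s⁽ⁱ⁾ = s_c⁽ⁱ⁾·(1 + ‖tᵢ − ω‖²)/(1 + ‖tᵢ − ι‖²) is injective on ℝ²; i.e., distinct target position estimates require distinct triples of spoofed source intensities. -/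
/-- For non-collinear towers `t i` with calibrated intensities `s_c i > 0`
and a fixed actual receiver position `ω`, the spoofing map
`ι ↦ (s_c i * (1 + ‖t i - ω‖²) / (1 + ‖t i - ι‖²))ᵢ` is injective:
distinct target estimates require distinct triples of spoofed source intensities. -/
theorem spoofing_map_injective
    (t : Fin 3 → EuclideanSpace ℝ (Fin 2)) (ht : AffineIndependent ℝ t)
    (s_c : Fin 3 → ℝ) (hs : ∀ i, 0 < s_c i)
    (ω : EuclideanSpace ℝ (Fin 2)) :
    Function.Injective
      (fun ι : EuclideanSpace ℝ (Fin 2) =>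
        fun i : Fin 3 => s_c i * (1 + ‖t i - ω‖ ^ 2) / (1 + ‖t i - ι‖ ^ 2)) := by
  intro x y hxy
  -- distances equal
  have hd : ∀ i, ‖t i - x‖ ^ 2 = ‖t i - y‖ ^ 2 := by
    intro i
    have h := congrFun hxy i
    simp only at h
    have hnum : s_c i * (1 + ‖t i - ω‖ ^ 2) ≠ 0 := by
      have h1 : (0:ℝ) < 1 + ‖t i - ω‖ ^ 2 := by positivity
      exact ne_of_gt (mul_pos (hs i) h1)
    have hx0 : (0:ℝ) < 1 + ‖t i - x‖ ^ 2 := by positivity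
    have hy0 : (0:ℝ) < 1 + ‖t i - y‖ ^ 2 := by positivity
    field_simp at h
    have h' := mul_left_cancel₀ (hs i).ne' h
    linarith
  -- inner products
  have hinner : ∀ i, inner ℝ (t i - t 0) (x - y) = (0:ℝ) := by
    intro i
    have hi := hd i
    have h0 := hd 0
    have ei : ‖t i - x‖ ^ 2 = ‖t i‖^2 - 2 * (inner ℝ (t i) x : ℝ) + ‖x‖^2 := by
      rw [norm_sub_sq_real]
    have eix : ‖t i - y‖ ^ 2 = ‖t i‖^2 - 2 * (inner ℝ (t i) y : ℝ) + ‖y‖^2 := by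
      rw [norm_sub_sq_real]
    have e0 : ‖t 0 - x‖ ^ 2 = ‖t 0‖^2 - 2 * (inner ℝ (t 0) x : ℝ) + ‖x‖^2 := by
      rw [norm_sub_sq_real]
    have e0y : ‖t 0 - y‖ ^ 2 = ‖t 0‖^2 - 2 * (inner ℝ (t 0) y : ℝ) + ‖y‖^2 := by
      rw [norm_sub_sq_real]
    have : (inner ℝ (t i) x : ℝ) - (inner ℝ (t i) y : ℝ) = (inner ℝ (t 0) x : ℝ) - (inner ℝ (t 0) y : ℝ) := by nlinarith
    have expand : inner ℝ (t i - t 0) (x - y) =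
        (inner ℝ (t i) x : ℝ) - (inner ℝ (t i) y : ℝ) - ((inner ℝ (t 0) x : ℝ) - (inner ℝ (t 0) y : ℝ)) := by
      simp [inner_sub_left, inner_sub_right]; ring
    rw [expand]; linarith
  -- vectorSpan is top
  have htop : affineSpan ℝ (Set.range t) = ⊤ := by
    rw [ht.affineSpan_eq_top_iff_card_eq_finrank_add_one]
    simp [finrank_euclideanSpace_fin]
  have hvtop : vectorSpan ℝ (Set.range t) = ⊤ :=
    AffineSubspace.vectorSpan_eq_top_of_affineSpan_eq_top ℝ _ _ htop
  have hmem : x - y ∈ (vectorSpan ℝ (Set.range t))ᗮ := by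
    rw [vectorSpan_def]
    rw [Submodule.mem_orthogonal]
    intro u hu
    induction hu using Submodule.span_induction with
    | mem u hu =>
      rcases hu with ⟨a, ⟨i, rfl⟩, b, ⟨j, rfl⟩, rfl⟩
      have : inner ℝ (t i - t j) (x - y) = (0:ℝ) := by
        have hi := hinner i
        have hj := hinner j
        have : t i - t j = (t i - t 0) - (t j - t 0) := by abel
        rw [this, inner_sub_left, hi, hj]; ring
      simpa [vsub_eq_sub] using this
    | zero => simp
    | add u v _ _ hu hv => rw [inner_add_left, hu, hv]; ring
    | smul c u _ hu => rw [inner_smul_left, hu]; ring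
  rw [hvtop, Submodule.top_orthogonal_eq_bot, Submodule.mem_bot, sub_eq_zero] at hmem
  exact hmem
end

section
/- Let K ∈ ℝ, let A be the 4×4 real block matrix A = [[I₂, K·I₂],[0, I₂]] and B the 4×2 real block matrix B = [[0₂],[−I₂]] (where I₂ and 0₂ are the 2×2 identity and zero matrices). Then the controllability matrix Co = [B | AB | A²B | A³B] ∈ ℝ^{4×8} has rank 4 if and only if K ≠ 0. -/
/-- With `A = [[I₂, K·I₂],[0, I₂]]` and `B = [[0₂],[-I₂]]`, the controllability
matrix `Co = [B | AB | A²B | A³B]` (a 4×8 matrix, here indexed by `(Fin 2 ⊕ Fin 2) × (Fin 4 × Fin 2)`,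
with column block `k` equal to `Aᵏ * B`) has rank 4 if and only if `K ≠ 0`. -/
theorem controllability_rank_iff (K : ℝ) :
    let A : Matrix (Fin 2 ⊕ Fin 2) (Fin 2 ⊕ Fin 2) ℝ :=
      Matrix.fromBlocks 1 (K • (1 : Matrix (Fin 2) (Fin 2) ℝ)) 0 1
    let B : Matrix (Fin 2 ⊕ Fin 2) (Fin 2) ℝ :=
      Matrix.fromRows (0 : Matrix (Fin 2) (Fin 2) ℝ) (-(1 : Matrix (Fin 2) (Fin 2) ℝ))
    let Co : Matrix (Fin 2 ⊕ Fin 2) (Fin 4 × Fin 2) ℝ :=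
      Matrix.of fun i kj => (A ^ (kj.1 : ℕ) * B) i kj.2
    Co.rank = 4 ↔ K ≠ 0 := by
  intro A B Co
  have hAB : A * B = Matrix.fromRows ((-K) • (1 : Matrix (Fin 2) (Fin 2) ℝ))
      (-(1 : Matrix (Fin 2) (Fin 2) ℝ)) := by
    show Matrix.fromBlocks 1 (K • 1) 0 1 * Matrix.fromRows 0 (-1) = _
    rw [Matrix.fromBlocks_mul_fromRows]
    congr 1 <;> simp
  constructor
  · -- rank = 4 → K ≠ 0
    intro h hK
    subst hK
    have hA1 : A = 1 := by
      show Matrix.fromBlocks 1 ((0:ℝ) • 1) 0 1 = 1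
      rw [zero_smul, Matrix.fromBlocks_one]
    have hCo : Co = B * (Matrix.of fun j kj => if j = kj.2 then (1:ℝ) else 0) := by
      ext i kj
      erw [Matrix.mul_apply]
      simp [Co, hA1, mul_ite]
    have h2 : Co.rank ≤ 2 := by
      rw [hCo]
      exact (Matrix.rank_mul_le_left _ _).trans
        ((Matrix.rank_le_card_width B).trans (by simp))
    omega
  · intro hK
    refine le_antisymm (by simpa using Matrix.rank_le_card_height Co) ?_
    -- the selected 4×4 submatrix
    set g : Fin 2 ⊕ Fin 2 → Fin 4 × Fin 2 :=
      Sum.elim (fun a => (1, a)) (fun a => (0, a)) with hg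
    set E : Matrix (Fin 4 × Fin 2) (Fin 2 ⊕ Fin 2) ℝ :=
      Matrix.of fun kj i => if g i = kj then 1 else 0 with hE
    have hM : Co * E = Matrix.fromBlocks ((-K) • 1) 0 (-1) (-1) := by
      ext i i'
      have : (Co * E) i i' = Co i (g i') := by
        simp [Matrix.mul_apply, hE, mul_ite]
      rw [this]
      cases i' with
      | inl a =>
        have : Co i (g (Sum.inl a)) = (A * B) i a := by simp [Co, hg, pow_one]
        rw [this, hAB]
        cases i <;> simp [Matrix.fromBlocks, Matrix.fromRows_apply_inl, Matrix.fromRows_apply_inr]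
      | inr a =>
        have : Co i (g (Sum.inr a)) = B i a := by simp [Co, hg]
        rw [this]
        cases i <;> simp [B, Matrix.fromBlocks, Matrix.fromRows_apply_inl, Matrix.fromRows_apply_inr]
    have hdet : IsUnit (Matrix.fromBlocks ((-K) • (1 : Matrix (Fin 2) (Fin 2) ℝ))
        (0 : Matrix (Fin 2) (Fin 2) ℝ) (-(1 : Matrix (Fin 2) (Fin 2) ℝ))
        (-(1 : Matrix (Fin 2) (Fin 2) ℝ))).det := by
      rw [Matrix.det_fromBlocks_zero₁₂]
      simp [Matrix.det_smul]
      constructor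
      · rw [Matrix.det_neg]
        simp [Matrix.det_smul, pow_two, hK]
      · rw [Matrix.det_neg]
        simp
    have h4 : (Co * E).rank = 4 := by
      rw [hM, Matrix.rank_of_isUnit _ ((Matrix.isUnit_iff_isUnit_det _).mpr hdet)]
      simp
    calc (4:ℕ) = (Co * E).rank := h4.symm
      _ ≤ Co.rank := Matrix.rank_mul_le_left _ _
end

section
/- Let K ∈ ℝ with K ≠ 0, and consider the dynamics ω_{k+1} = ω_k + K·(x_G^r − ι_k), ι_{k+1} = ι_k + u_k with ω_k, ι_k, u_k ∈ ℝ². For any initial state (ω₁, ι₁) ∈ ℝ² × ℝ², any receiver goal x_G^r ∈ ℝ², and any producer goal x_G^p ∈ ℝ², there exist producer actions u₁, u₂ ∈ ℝ² such that ω₃ = x_G^p and ι₃ = x_G^r; moreover, applying u_k = 0 for all k ≥ 3 keeps the state fixed at (x_G^p, x_G^r) for all subsequent stages. -/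
/-- For the dynamics `ω_{k+1} = ω_k + K·(x_G^r - ι_k)`, `ι_{k+1} = ι_k + u_k`
with `K ≠ 0`, from any initial state `(ω₁, ι₁)` there exist producer actions (with `u_k = 0`
for all `k ≥ 3`) such that `ω₃ = x_G^p` and `ι₃ = x_G^r`, and the state stays at
`(x_G^p, x_G^r)` for all subsequent stages. -/
theorem producer_two_step_reachability
    (K : ℝ) (hK : K ≠ 0)
    (ω₁ ι₁ xGr xGp : EuclideanSpace ℝ (Fin 2)) :
    ∃ u : ℕ → EuclideanSpace ℝ (Fin 2),
      (∀ k ≥ 3, u k = 0) ∧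
      ∀ ω ι : ℕ → EuclideanSpace ℝ (Fin 2),
        ω 1 = ω₁ → ι 1 = ι₁ →
        (∀ k ≥ 1, ω (k + 1) = ω k + K • (xGr - ι k)) →
        (∀ k ≥ 1, ι (k + 1) = ι k + u k) →
        ω 3 = xGp ∧ ι 3 = xGr ∧ ∀ k ≥ 3, ω k = xGp ∧ ι k = xGr := by
  set ι₂ : EuclideanSpace ℝ (Fin 2) := K⁻¹ • (ω₁ - xGp) + (2:ℝ) • xGr - ι₁ with hι₂def
  refine ⟨fun k => if k = 1 then ι₂ - ι₁ else if k = 2 then xGr - ι₂ else 0, ?_, ?_⟩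
  · intro k hk
    have h1 : k ≠ 1 := by omega
    have h2 : k ≠ 2 := by omega
    simp [h1, h2]
  intro ω ι hω1 hι1 hωrec hιrec
  have hι2 : ι 2 = ι₂ := by
    have := hιrec 1 (le_refl 1)
    simp at this
    rw [this, hι1]; abel
  have hι3 : ι 3 = xGr := by
    have := hιrec 2 (by norm_num)
    simp at this
    rw [this, hι2]; abel
  have hω2 : ω 2 = ω₁ + K • (xGr - ι₁) := by
    have := hωrec 1 (le_refl 1)
    simp at this
    rw [this, hω1, hι1]
  have hω3 : ω 3 = xGp := by
    have := hωrec 2 (by norm_num)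
    simp at this
    rw [this, hω2, hι2, hι₂def]
    match_scalars <;> field_simp <;> ring
  have hstay : ∀ k ≥ 3, ω k = xGp ∧ ι k = xGr := by
    intro k hk
    induction k with
    | zero => omega
    | succ n ih =>
      rcases Nat.lt_or_ge n 3 with h | h
      · interval_cases n
        · omega
        · omega
        · exact ⟨hω3, hι3⟩
      · obtain ⟨hωn, hιn⟩ := ih h
        have hn1 : n ≥ 1 := by omega
        have hω' := hωrec n hn1
        have hι' := hιrec n hn1
        have hne1 : n ≠ 1 := by omega
        have hne2 : n ≠ 2 := by omega
        rw [hωn, hιn] at hω'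
        simp [hne1, hne2] at hι'
        rw [hιn] at hι'
        refine ⟨by rw [hω']; simp, hι'⟩
  exact ⟨hω3, hι3, hstay⟩
end

section
/- Let t₁, t₂, t₃ ∈ ℝ² be non-collinear tower positions with calibrated source intensities s_c⁽ⁱ⁾ > 0, let Θ ⊆ ℝ² be a set of admissible displacements, and let ι ∈ ℝ² be the receiver's current position estimate. Suppose the producer chooses u ∈ Θ and spoofs the tower intensities so that the receiver's observation y satisfies h(ι + u) = y, where h(x)ᵢ = s_c⁽ⁱ⁾/(1 + ‖x − tᵢ‖²). Then the advanced receiver's updated information state h⁻¹(y) ∩ {ι + θ : θ ∈ Θ} equals the singleton {ι + u}; in particular it is nonempty (plausible). -/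
/-- For non-collinear towers with calibrated intensities `s_c i > 0`, an
admissible displacement set `Θ`, a current estimate `ι`, and a producer choice `u ∈ Θ`
spoofing the intensities so the receiver observes `y = h (ι + u)` (with
`h(x) i = s_c i / (1 + ‖x - t i‖²)`), the advanced receiver's updated information state
`h⁻¹(y) ∩ {ι + θ : θ ∈ Θ}` equals `{ι + u}`; in particular it is nonempty (plausible). -/
theorem advanced_receiver_update_singleton
    (t : Fin 3 → EuclideanSpace ℝ (Fin 2)) (ht : AffineIndependent ℝ t)
    (s_c : Fin 3 → ℝ) (hs : ∀ i, 0 < s_c i)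
    (Θ : Set (EuclideanSpace ℝ (Fin 2)))
    (ι u : EuclideanSpace ℝ (Fin 2)) (hu : u ∈ Θ)
    (h : EuclideanSpace ℝ (Fin 2) → Fin 3 → ℝ)
    (hdef : ∀ x i, h x i = s_c i / (1 + ‖x - t i‖ ^ 2))
    (y : Fin 3 → ℝ) (hy : h (ι + u) = y) :
    h ⁻¹' {y} ∩ {z | ∃ θ ∈ Θ, z = ι + θ} = {ι + u} ∧
    (h ⁻¹' {y} ∩ {z | ∃ θ ∈ Θ, z = ι + θ}).Nonempty := by
  subst hy
  have hinj : ∀ x x' : EuclideanSpace ℝ (Fin 2), h x = h x' → x = x' := by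
    intro x x' hxx
    have hdist : ∀ i, dist x (t i) = dist x' (t i) := by
      intro i
      have hi := congrFun hxx i
      rw [hdef, hdef] at hi
      have h1 : (0:ℝ) < 1 + ‖x - t i‖ ^ 2 := by positivity
      have h2 : (0:ℝ) < 1 + ‖x' - t i‖ ^ 2 := by positivity
      have hsi := hs i
      field_simp at hi
      rw [dist_eq_norm, dist_eq_norm]
      have hsq : ‖x - t i‖ ^ 2 = ‖x' - t i‖ ^ 2 := by linarith
      exact (pow_left_inj₀ (norm_nonneg _) (norm_nonneg _) two_ne_zero).mp hsq
    have hspan : affineSpan ℝ (Set.range t) = ⊤ := by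
      rw [ht.affineSpan_eq_top_iff_card_eq_finrank_add_one]
      simp [finrank_euclideanSpace]
    have hvs : vectorSpan ℝ (Set.range t) = ⊤ := by
      rw [← direction_affineSpan, hspan, AffineSubspace.direction_top]
    have hv : x' - x ∈ (vectorSpan ℝ (Set.range t))ᗮ := by
      rw [vectorSpan_def, Submodule.mem_orthogonal]
      intro w hw
      refine Submodule.span_induction ?_ ?_ ?_ ?_ hw
      · rintro _ ⟨a, ha, b, hb, rfl⟩
        obtain ⟨i, rfl⟩ := ha
        obtain ⟨j, rfl⟩ := hb
        have := EuclideanGeometry.inner_vsub_vsub_of_dist_eq_of_dist_eq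
          (hdist j) (hdist i)
        simpa using this
      · simp
      · intro a b _ _ ha hb
        rw [inner_add_left, ha, hb, add_zero]
      · intro c a _ ha
        rw [inner_smul_left, ha, mul_zero]
    rw [hvs, Submodule.top_orthogonal_eq_bot, Submodule.mem_bot, sub_eq_zero] at hv
    exact hv.symm
  have heq : h ⁻¹' {h (ι + u)} ∩ {z | ∃ θ ∈ Θ, z = ι + θ} = {ι + u} := by
    ext z
    constructor
    · rintro ⟨hz1, -⟩
      exact hinj z (ι + u) hz1
    · rintro rfl
      exact ⟨rfl, u, hu, rfl⟩
  exact ⟨heq, heq ▸ ⟨ι + u, rfl⟩⟩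
end
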